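/- Let K₁ > 1/2 be a real number and Δt > 0. Then for all nonnegative integers k and r, [Γ(k + 1 + Δt⁻¹) · Γ(r + 1 + Δt⁻¹ + 2K₁)] / [Γ(k + 1 + Δt⁻¹ + 2K₁) · Γ(r + 1 + Δt⁻¹)] ≤ ((k+1)Δt + 1)^{−2K₁} · ((r + 1 + 2K₁)Δt + 1)^{2K₁}. -/

import Mathlib

open Real

lemma gamma_upper_aux (t s : ℝ) (ht : 0 < t) (hs : 0 < s) :
    Real.Gamma (t + s) ≤ Real.Gamma t * (t + s) ^ s := by
  have hts : 0 < t + s := by linarith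
  have h := Real.convexOn_log_Gamma.slope_mono_adjacent
      (Set.mem_Ioi.mpr ht) (Set.mem_Ioi.mpr (show (0:ℝ) < t + s + 1 by linarith))
      (show t < t + s by linarith) (show t + s < t + s + 1 by linarith)
  simp only [Function.comp] at h
  have hG1 : Real.Gamma (t + s + 1) = (t + s) * Real.Gamma (t + s) := by
    rw [Real.Gamma_add_one hts.ne']
  have hGp : 0 < Real.Gamma (t + s) := Real.Gamma_pos_of_pos hts
  have hGtp : 0 < Real.Gamma t := Real.Gamma_pos_of_pos ht
  rw [hG1, Real.log_mul hts.ne' hGp.ne'] at h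
  have h2 : (Real.log (Real.Gamma (t + s)) - Real.log (Real.Gamma t)) / s
      ≤ Real.log (t + s) := by
    calc (Real.log (Real.Gamma (t+s)) - Real.log (Real.Gamma t)) / s
        = (Real.log (Real.Gamma (t+s)) - Real.log (Real.Gamma t)) / (t + s - t) := by ring_nf
      _ ≤ (Real.log (t+s) + Real.log (Real.Gamma (t+s)) - Real.log (Real.Gamma (t+s)))
            / (t + s + 1 - (t + s)) := h
      _ = Real.log (t + s) := by ring_nf
  have h3 : Real.log (Real.Gamma (t + s)) ≤ Real.log (Real.Gamma t) + s * Real.log (t + s) := by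
    rw [div_le_iff₀ hs] at h2; linarith
  have h4 : Real.Gamma t * (t + s) ^ s
      = Real.exp (Real.log (Real.Gamma t) + s * Real.log (t + s)) := by
    rw [Real.exp_add, Real.exp_log hGtp, Real.rpow_def_of_pos hts, mul_comm s]
  rw [h4]
  calc Real.Gamma (t + s) = Real.exp (Real.log (Real.Gamma (t + s))) := (Real.exp_log hGp).symm
    _ ≤ _ := Real.exp_le_exp.mpr h3

lemma gamma_lower_aux (t s : ℝ) (ht : 0 < t) (hs : 1 ≤ s) :
    Real.Gamma t * t ^ s ≤ Real.Gamma (t + s) := by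
  have hts : 0 < t + s := by linarith
  have h := Real.convexOn_log_Gamma.secant_mono
      (Set.mem_Ioi.mpr ht) (Set.mem_Ioi.mpr (show (0:ℝ) < t + 1 by linarith))
      (Set.mem_Ioi.mpr hts)
      (show t + 1 ≠ t by linarith) (show t + s ≠ t by linarith)
      (show t + 1 ≤ t + s by linarith)
  simp only [Function.comp] at h
  have hG1 : Real.Gamma (t + 1) = t * Real.Gamma t := Real.Gamma_add_one ht.ne'
  have hGp : 0 < Real.Gamma (t + s) := Real.Gamma_pos_of_pos hts
  have hGtp : 0 < Real.Gamma t := Real.Gamma_pos_of_pos ht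
  rw [hG1, Real.log_mul ht.ne' hGtp.ne'] at h
  have h2 : Real.log t ≤ (Real.log (Real.Gamma (t + s)) - Real.log (Real.Gamma t)) / s := by
    calc Real.log t
        = (Real.log t + Real.log (Real.Gamma t) - Real.log (Real.Gamma t)) / (t + 1 - t) := by
          ring_nf
      _ ≤ (Real.log (Real.Gamma (t + s)) - Real.log (Real.Gamma t)) / (t + s - t) := h
      _ = _ := by ring_nf
  have hs0 : (0:ℝ) < s := by linarith
  have h3 : Real.log (Real.Gamma t) + s * Real.log t ≤ Real.log (Real.Gamma (t + s)) := by
    rw [le_div_iff₀ hs0] at h2; linarith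
  have h4 : Real.Gamma t * t ^ s
      = Real.exp (Real.log (Real.Gamma t) + s * Real.log t) := by
    rw [Real.exp_add, Real.exp_log hGtp, Real.rpow_def_of_pos ht, mul_comm s]
  rw [h4]
  calc Real.exp (Real.log (Real.Gamma t) + s * Real.log t)
      ≤ Real.exp (Real.log (Real.Gamma (t + s))) := Real.exp_le_exp.mpr h3
    _ = Real.Gamma (t + s) := Real.exp_log hGp

/-- Second gamma-ratio estimate in the proof of Theorem 3.5 (backward Euler–Maruyama). -/
theorem bem_gamma_ratio_second (K₁ Δt : ℝ) (hK₁ : 1 / 2 < K₁) (hΔt : 0 < Δt) :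
    ∀ k r : ℕ,
      Real.Gamma ((k : ℝ) + 1 + Δt⁻¹) * Real.Gamma ((r : ℝ) + 1 + Δt⁻¹ + 2 * K₁) /
          (Real.Gamma ((k : ℝ) + 1 + Δt⁻¹ + 2 * K₁) * Real.Gamma ((r : ℝ) + 1 + Δt⁻¹)) ≤
        (((k : ℝ) + 1) * Δt + 1) ^ (-(2 * K₁)) *
          (((r : ℝ) + 1 + 2 * K₁) * Δt + 1) ^ (2 * K₁) := by
  intro k r
  set s : ℝ := 2 * K₁ with hsdef
  have hs1 : 1 ≤ s := by simp [hsdef]; linarith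
  have hs0 : (0:ℝ) < s := by linarith
  have hΔt' : 0 < Δt⁻¹ := inv_pos.mpr hΔt
  set x : ℝ := (k : ℝ) + 1 + Δt⁻¹ with hxdef
  set y : ℝ := (r : ℝ) + 1 + Δt⁻¹ + s with hydef
  have hx : 0 < x := by positivity
  have hy' : 0 < (r : ℝ) + 1 + Δt⁻¹ := by positivity
  have hy : 0 < y := by positivity
  -- rewrite RHS bases
  have hb1 : ((k : ℝ) + 1) * Δt + 1 = x * Δt := by
    field_simp [hxdef]
    rw [hxdef]; linear_combination (-1:ℝ) * mul_inv_cancel₀ hΔt.ne'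
  have hb2 : ((r : ℝ) + 1 + 2 * K₁) * Δt + 1 = y * Δt := by
    field_simp [hydef, hsdef]; rw [hydef, hsdef]; linear_combination (-1:ℝ) * mul_inv_cancel₀ hΔt.ne'
  rw [hb1, hb2]
  have hGx : 0 < Real.Gamma x := Real.Gamma_pos_of_pos hx
  have hGxs : 0 < Real.Gamma (x + s) := Real.Gamma_pos_of_pos (by linarith)
  have hGy : 0 < Real.Gamma y := Real.Gamma_pos_of_pos hy
  have hGy' : 0 < Real.Gamma ((r : ℝ) + 1 + Δt⁻¹) := Real.Gamma_pos_of_pos hy'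
  have hA : Real.Gamma x / Real.Gamma (x + s) ≤ x ^ (-s) := by
    have h := gamma_lower_aux x s hx hs1
    have hxs : 0 < x ^ s := Real.rpow_pos_of_pos hx s
    rw [Real.rpow_neg hx.le, div_le_iff₀ hGxs, inv_mul_eq_div, le_div_iff₀ hxs]
    exact h
  have hB : Real.Gamma y / Real.Gamma ((r : ℝ) + 1 + Δt⁻¹) ≤ y ^ s := by
    have h := gamma_upper_aux ((r : ℝ) + 1 + Δt⁻¹) s hy' hs0
    rw [div_le_iff₀ hGy']
    calc Real.Gamma y = Real.Gamma ((r : ℝ) + 1 + Δt⁻¹ + s) := by rw [hydef]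
      _ ≤ Real.Gamma ((r : ℝ) + 1 + Δt⁻¹) * ((r : ℝ) + 1 + Δt⁻¹ + s) ^ s := h
      _ = y ^ s * Real.Gamma ((r : ℝ) + 1 + Δt⁻¹) := by rw [hydef]; ring
  have key : Real.Gamma x * Real.Gamma y /
      (Real.Gamma (x + s) * Real.Gamma ((r : ℝ) + 1 + Δt⁻¹)) ≤ x ^ (-s) * y ^ s := by
    have h1 : Real.Gamma x * Real.Gamma y /
        (Real.Gamma (x + s) * Real.Gamma ((r : ℝ) + 1 + Δt⁻¹))
        = (Real.Gamma x / Real.Gamma (x + s)) *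
          (Real.Gamma y / Real.Gamma ((r : ℝ) + 1 + Δt⁻¹)) := by ring
    rw [h1]
    exact mul_le_mul hA hB (by positivity) (by positivity)
  have hrw : (x * Δt) ^ (-s) * (y * Δt) ^ s = x ^ (-s) * y ^ s := by
    rw [Real.mul_rpow hx.le hΔt.le, Real.mul_rpow hy.le hΔt.le, Real.rpow_neg hΔt.le]
    have hp : (0:ℝ) < Δt ^ s := Real.rpow_pos_of_pos hΔt s
    field_simp
  rw [hrw]
  have hgoal : Real.Gamma x + 0 = Real.Gamma x := by ring
  calc Real.Gamma ((k : ℝ) + 1 + Δt⁻¹) * Real.Gamma ((r : ℝ) + 1 + Δt⁻¹ + 2 * K₁) /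
        (Real.Gamma ((k : ℝ) + 1 + Δt⁻¹ + 2 * K₁) * Real.Gamma ((r : ℝ) + 1 + Δt⁻¹))
      = Real.Gamma x * Real.Gamma y /
        (Real.Gamma (x + s) * Real.Gamma ((r : ℝ) + 1 + Δt⁻¹)) := by
        rw [hxdef, hydef, hsdef]
    _ ≤ x ^ (-s) * y ^ s := key
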